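/- Let $a_1,a_2,\ldots\in\{-1,1\}$ satisfy, for each $k=0,\ldots,m-1$, $\sum_{i=1}^{k}(-1)^{i+1}a_ia_{2k+2-i} = (1+(-1)^{k+1})/2$. Then $\prod_{i=1}^{2k+1} a_i = a_{k+1}$ for $k=0,1,\ldots,m-1$. -/
import Mathlib

open Finset

lemma aux_pm (c : ℕ → ℤ) (hc : ∀ i, c i = 1 ∨ c i = -1) (n : ℕ) :
    ∃ t : ℕ, (∑ i ∈ range n, c i) = (n : ℤ) - 2 * t ∧ ∏ i ∈ range n, c i = (-1) ^ t := by
  induction n with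
  | zero => exact ⟨0, by simp⟩
  | succ n ih =>
    obtain ⟨t, hs, hp⟩ := ih
    rcases hc n with h | h
    · refine ⟨t, ?_, ?_⟩ <;>
        simp [Finset.sum_range_succ, Finset.prod_range_succ, hs, hp, h]
      ring
    · refine ⟨t + 1, ?_, ?_⟩
      · simp [Finset.sum_range_succ, hs, h]; ring
      · simp [Finset.prod_range_succ, hp, h, pow_succ]

theorem stmt7 (m : ℕ) (a : ℕ → ℤ)
    (ha : ∀ j, a j = 1 ∨ a j = -1)
    (hsum : ∀ k ≤ m - 1, ∑ i ∈ Icc 1 k, (-1 : ℤ) ^ (i + 1) * (a i * a (2 * k + 2 - i)) =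
      (1 + (-1 : ℤ) ^ (k + 1)) / 2) :
    ∀ k ≤ m - 1, ∏ i ∈ Icc 1 (2 * k + 1), a i = a (k + 1) := by
  intro k hk
  have hb := hsum k hk
  set c : ℕ → ℤ := fun i => (-1) ^ i * (a (1 + i) * a (2 * k + 1 - i)) with hc_def
  have hc : ∀ i, c i = 1 ∨ c i = -1 := by
    intro i
    rcases ha (1 + i) with h | h <;> rcases ha (2 * k + 1 - i) with h' | h' <;>
      rcases Nat.even_or_odd i with he | he <;>
        simp [hc_def, h, h', he.neg_one_pow]
  have hsum_c : ∑ i ∈ range k, c i = (1 + (-1 : ℤ) ^ (k + 1)) / 2 := by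
    rw [← hb, ← Finset.Ico_add_one_right_eq_Icc, Finset.sum_Ico_eq_sum_range]
    refine Finset.sum_congr rfl fun i hi => ?_
    have h1 : 2 * k + 2 - (1 + i) = 2 * k + 1 - i := by omega
    have h2 : (-1 : ℤ) ^ (1 + i + 1) = (-1) ^ i := by
      rw [show 1 + i + 1 = i + 2 by ring, pow_add]; ring
    simp only [hc_def, h1, h2]
  obtain ⟨t, hst, hpt⟩ := aux_pm c hc k
  have hP : ∏ i ∈ range k, c i =
      (-1 : ℤ) ^ (k * (k - 1) / 2) * ∏ i ∈ range k, (a (1 + i) * a (2 * k + 1 - i)) := by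
    simp only [hc_def]
    rw [Finset.prod_mul_distrib, Finset.prod_pow_eq_pow_sum, Finset.sum_range_id]
  set P : ℤ := ∏ i ∈ range k, (a (1 + i) * a (2 * k + 1 - i)) with hPdef
  have hPval : P = (-1 : ℤ) ^ (k * (k - 1) / 2 + t) := by
    have he : ((-1 : ℤ) ^ (k * (k - 1) / 2)) * ((-1 : ℤ) ^ (k * (k - 1) / 2)) = 1 := by
      rw [← pow_add]; exact Even.neg_one_pow ⟨_, rfl⟩
    calc P = ((-1 : ℤ) ^ (k * (k - 1) / 2) * (-1 : ℤ) ^ (k * (k - 1) / 2)) * P := by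
            rw [he, one_mul]
      _ = (-1 : ℤ) ^ (k * (k - 1) / 2) * (-1 : ℤ) ^ t := by rw [mul_assoc, ← hP, hpt]
      _ = (-1 : ℤ) ^ (k * (k - 1) / 2 + t) := (pow_add _ _ _).symm
  have hPeq1 : P = 1 := by
    rw [hPval]
    apply Even.neg_one_pow
    rcases Nat.even_or_odd k with ⟨q, hq⟩ | ⟨q, hq⟩
    · -- k even, k = q + q
      have hrhs : (1 + (-1 : ℤ) ^ (k + 1)) / 2 = 0 := by
        have hodd : Odd (k + 1) := ⟨q, by omega⟩
        rw [hodd.neg_one_pow]; norm_num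
      rw [hsum_c, hrhs] at hst
      have ht : k = 2 * t := by exact_mod_cast by linarith [hst]
      have hq' : t = q := by omega
      rcases Nat.eq_zero_or_pos q with h0 | h0
      · have : k = 0 := by omega
        simp [this, hq', h0]
      · obtain ⟨n, rfl⟩ : ∃ n, q = n + 1 := ⟨q - 1, by omega⟩
        have hmul : k * (k - 1) = 2 * ((n + 1) * (2 * n + 1)) := by
          have h1 : k = 2 * (n + 1) := by omega
          have h2 : k - 1 = 2 * n + 1 := by omega
          rw [h1, show 2 * (n + 1) - 1 = 2 * n + 1 from by omega]; ring
        have hdiv : k * (k - 1) / 2 = (n + 1) * (2 * n + 1) := by omega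
        rw [hdiv, hq']
        exact ⟨(n + 1) * (n + 1), by ring⟩
    · -- k odd, k = 2q + 1
      have hrhs : (1 + (-1 : ℤ) ^ (k + 1)) / 2 = 1 := by
        have heven : Even (k + 1) := ⟨q + 1, by omega⟩
        rw [heven.neg_one_pow]; norm_num
      rw [hsum_c, hrhs] at hst
      have ht : k = 2 * t + 1 := by exact_mod_cast by linarith [hst]
      have hq' : t = q := by omega
      have hmul : k * (k - 1) = 2 * ((2 * q + 1) * q) := by
        have h1 : k - 1 = 2 * q := by omega
        rw [hq, show 2 * q + 1 - 1 = 2 * q from by omega]; ring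
      have hdiv : k * (k - 1) / 2 = (2 * q + 1) * q := by omega
      rw [hdiv, hq']
      exact ⟨q * q + q, by ring⟩
  have hsplit : ∏ i ∈ Icc 1 (2 * k + 1), a i = P * a (k + 1) := by
    rw [← Finset.Ico_add_one_right_eq_Icc, Finset.prod_Ico_eq_prod_range]
    rw [show 2 * k + 1 + 1 - 1 = k + (k + 1) by omega, Finset.prod_range_add,
      Finset.prod_range_succ', hPdef, Finset.prod_mul_distrib]
    have hrefl : ∏ i ∈ range k, a (2 * k + 1 - i) = ∏ i ∈ range k, a (1 + (k + (i + 1))) := by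
      rw [← Finset.prod_range_reflect (fun i => a (1 + (k + (i + 1)))) k]
      refine Finset.prod_congr rfl fun j hj => ?_
      simp only [Finset.mem_range] at hj
      congr 1
      omega
    rw [hrefl]
    have h0 : a (1 + (k + 0)) = a (k + 1) := by congr 1; omega
    rw [h0]
    ring
  rw [hsplit, hPeq1, one_mul]
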